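/- The Huber smoothing function h, viewed as a function ℝ × ℝ → ℝ, is continuously differentiable (of class C¹) at every point (ε,t) with ε ≠ 0. -/

import Mathlib

/-- The Huber smoothing function `h(ε,t)`: for `ε ≠ 0` it equals `t - |ε|/2` if `t > |ε|`,
`t²/(2|ε|)` if `0 ≤ t ≤ |ε|`, and `0` if `t < 0`; and `h(0,t) = max 0 t`. -/
noncomputable def huber (ε t : ℝ) : ℝ :=
  if ε = 0 then max 0 t
  else if |ε| < t then t - |ε| / 2
  else if 0 ≤ t then t ^ 2 / (2 * |ε|)
  else 0

private theorem q_hasDerivAt (x : ℝ) :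
    HasDerivAt (fun y : ℝ => y * max 0 y) (2 * max 0 x) x := by
  rcases lt_trichotomy x 0 with hx | rfl | hx
  · have h : (fun y : ℝ => y * max 0 y) =ᶠ[nhds x] fun _ => (0 : ℝ) := by
      filter_upwards [Iio_mem_nhds hx] with y hy
      simp [max_eq_left (le_of_lt (Set.mem_Iio.mp hy))]
    have : HasDerivAt (fun _ : ℝ => (0 : ℝ)) 0 x := hasDerivAt_const x 0
    simpa [max_eq_left hx.le] using this.congr_of_eventuallyEq h
  · rw [hasDerivAt_iff_tendsto_slope]
    have h : slope (fun y : ℝ => y * max 0 y) 0 =ᶠ[nhdsWithin 0 {(0:ℝ)}ᶜ]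
        fun y => max 0 y := by
      filter_upwards [self_mem_nhdsWithin] with y hy
      simp only [Set.mem_compl_iff, Set.mem_singleton_iff] at hy
      simp [slope, hy, mul_comm, mul_div_assoc, div_self hy]
    rw [Filter.tendsto_congr' h]
    have : Filter.Tendsto (fun y : ℝ => max 0 y) (nhds 0) (nhds (max 0 0)) :=
      (continuous_const.max continuous_id).tendsto 0
    simpa using this.mono_left nhdsWithin_le_nhds
  · have h : (fun y : ℝ => y * max 0 y) =ᶠ[nhds x] fun y => y * y := by
      filter_upwards [Ioi_mem_nhds hx] with y hy
      simp [max_eq_right (le_of_lt (Set.mem_Ioi.mp hy))]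
    have : HasDerivAt (fun y : ℝ => y * y) (2 * x) x := by
      simpa [two_mul, Pi.mul_def] using (hasDerivAt_id' x).mul (hasDerivAt_id' x)
    simpa [max_eq_right hx.le] using this.congr_of_eventuallyEq h

private theorem q_contDiff : ContDiff ℝ 1 (fun y : ℝ => y * max 0 y) := by
  rw [contDiff_one_iff_deriv]
  refine ⟨fun x => (q_hasDerivAt x).differentiableAt, ?_⟩
  have : deriv (fun y : ℝ => y * max 0 y) = fun x => 2 * max 0 x := by
    funext x; exact (q_hasDerivAt x).deriv
  rw [this]
  exact continuous_const.mul (continuous_const.max continuous_id)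

private theorem huber_eq (e s : ℝ) (he : e ≠ 0) :
    huber e s = (s * max 0 s - (s - |e|) * max 0 (s - |e|)) / (2 * |e|) := by
  have ha : 0 < |e| := abs_pos.mpr he
  rw [huber, if_neg he]
  split_ifs with h1 h2
  · have hs : 0 < s := lt_trans ha h1
    rw [max_eq_right hs.le, max_eq_right (sub_pos.mpr h1).le]
    field_simp
    ring
  · push_neg at h1
    rw [max_eq_right h2, max_eq_left (sub_nonpos.mpr h1)]
    ring_nf
  · push_neg at h2
    rw [max_eq_left h2.le, max_eq_left (sub_nonpos.mpr (h2.le.trans ha.le))]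
    simp

/-- The Huber function, viewed as a function `ℝ × ℝ → ℝ`, is continuously differentiable
(of class `C¹`) at every point `(ε,t)` with `ε ≠ 0`. -/
theorem huber_contDiffAt (ε t : ℝ) (hε : ε ≠ 0) :
    ContDiffAt ℝ 1 (fun p : ℝ × ℝ => huber p.1 p.2) (ε, t) := by
  have habs : ContDiffAt ℝ 1 (fun p : ℝ × ℝ => |p.1|) (ε, t) :=
    (contDiffAt_abs hε).comp (ε, t) contDiffAt_fst
  have h1 : ContDiffAt ℝ 1 (fun p : ℝ × ℝ => p.2 * max 0 p.2) (ε, t) :=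
    q_contDiff.contDiffAt.comp (ε, t) contDiffAt_snd
  have h2 : ContDiffAt ℝ 1
      (fun p : ℝ × ℝ => (p.2 - |p.1|) * max 0 (p.2 - |p.1|)) (ε, t) :=
    q_contDiff.contDiffAt.comp (ε, t) (contDiffAt_snd.sub habs)
  have hF : ContDiffAt ℝ 1
      (fun p : ℝ × ℝ =>
        (p.2 * max 0 p.2 - (p.2 - |p.1|) * max 0 (p.2 - |p.1|)) / (2 * |p.1|)) (ε, t) := by
    refine (h1.sub h2).div (contDiffAt_const.mul habs) ?_
    positivity
  refine hF.congr_of_eventuallyEq ?_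
  have hopen : {p : ℝ × ℝ | p.1 ≠ 0} ∈ nhds (ε, t) :=
    (isOpen_compl_singleton.preimage continuous_fst).mem_nhds hε
  filter_upwards [hopen] with p hp
  exact huber_eq p.1 p.2 hp
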